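/- For every tensor f : (Π i : Fin d, Fin (n i)) → ℂ and every tuple g = (g_i) of invertible matrices g_i : Fin (n i) → Fin (n i) → ℂ, the tangent space satisfies T_{(⊗_i g_i) f} = (⊗_i g_i) T_f (the image of T_f under the invertible linear map ⊗_i g_i); in particular dim T_{(⊗_i g_i) f} = dim T_f. -/
import Mathlib


open scoped BigOperators

namespace Tensor

variable {d : ℕ} {n : Fin d → ℕ}

/-- The action of a tuple of matrices `g i : Fin (n i) → Fin (n i) → ℂ` on a tensor:
`((⊗ᵢ gᵢ) f)(p) = Σ_q (Πᵢ gᵢ (p i) (q i)) · f q`. -/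
noncomputable def actT (g : ∀ i : Fin d, Fin (n i) → Fin (n i) → ℂ)
    (f : (∀ i : Fin d, Fin (n i)) → ℂ) : (∀ i : Fin d, Fin (n i)) → ℂ :=
  fun p => ∑ q : ∀ i : Fin d, Fin (n i), (∏ i : Fin d, g i (p i) (q i)) * f q

/-- The Lie algebra action of a tuple of matrices `A i : Fin (n i) → Fin (n i) → ℂ`
on a tensor: `(A · f)(p) = Σᵢ Σ_k Aᵢ (p i) k · f (p with i-th entry replaced by k)`. -/
noncomputable def lieAct (A : ∀ i : Fin d, Fin (n i) → Fin (n i) → ℂ)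
    (f : (∀ i : Fin d, Fin (n i)) → ℂ) : (∀ i : Fin d, Fin (n i)) → ℂ :=
  fun p => ∑ i : Fin d, ∑ k : Fin (n i), A i (p i) k * f (Function.update p i k)

/-- The tangent space `T_f` of the group action at `f`: the set of all tensors
`A · f` for tuples of matrices `A`. -/
def Tspace (f : (∀ i : Fin d, Fin (n i)) → ℂ) : Set ((∀ i : Fin d, Fin (n i)) → ℂ) :=
  {h | ∃ A : ∀ i : Fin d, Fin (n i) → Fin (n i) → ℂ, h = lieAct A f}

end Tensor

namespace TensorAux

open Tensor

variable {d : ℕ} {n : Fin d → ℕ}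

/-- The swap involution used to reindex sums. -/
def σ (j : Fin d) : ((∀ i, Fin (n i)) × Fin (n j)) ≃ ((∀ i, Fin (n i)) × Fin (n j)) where
  toFun x := (Function.update x.1 j x.2, x.1 j)
  invFun x := (Function.update x.1 j x.2, x.1 j)
  left_inv x := by
    ext <;> simp [Function.update_idem]
  right_inv x := by
    ext <;> simp [Function.update_idem]

/-- The key commutation relation: if `A j * g j = g j * B j` entrywise then
the Lie algebra action of `A` on `actT g f` equals `actT g` of the action of `B` on `f`. -/
lemma key (g A B : ∀ i : Fin d, Fin (n i) → Fin (n i) → ℂ)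
    (hAB : ∀ j a b, ∑ k, A j a k * g j k b = ∑ k, g j a k * B j k b)
    (f : (∀ i : Fin d, Fin (n i)) → ℂ) :
    lieAct A (actT g f) = actT g (lieAct B f) := by
  funext p
  simp only [lieAct, actT]
  have prodsplit : ∀ (j : Fin d) (k : Fin (n j)) (q : ∀ i, Fin (n i)),
      (∏ i, g i (Function.update p j k i) (q i))
        = g j k (q j) * ∏ i ∈ Finset.univ.erase j, g i (p i) (q i) := by
    intro j k q
    rw [← Finset.mul_prod_erase Finset.univ _ (Finset.mem_univ j)]
    rw [Function.update_self]
    congr 1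
    exact Finset.prod_congr rfl fun i hi => by
      rw [Function.update_of_ne (Finset.ne_of_mem_erase hi)]
  have lhs_eq : ∀ j : Fin d,
      (∑ k : Fin (n j), A j (p j) k *
          ∑ q : ∀ i, Fin (n i), (∏ i, g i (Function.update p j k i) (q i)) * f q)
        = ∑ q : ∀ i, Fin (n i), (∑ k, A j (p j) k * g j k (q j)) *
            ((∏ i ∈ Finset.univ.erase j, g i (p i) (q i)) * f q) := by
    intro j
    simp only [Finset.mul_sum]
    rw [Finset.sum_comm]
    refine Finset.sum_congr rfl fun q _ => ?_
    rw [Finset.sum_mul]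
    refine Finset.sum_congr rfl fun k _ => ?_
    rw [prodsplit]
    ring
  have rhs_eq : ∀ j : Fin d,
      (∑ q : ∀ i, Fin (n i), (∏ i, g i (p i) (q i)) *
          ∑ m : Fin (n j), B j (q j) m * f (Function.update q j m))
        = ∑ q : ∀ i, Fin (n i), (∑ m, g j (p j) m * B j m (q j)) *
            ((∏ i ∈ Finset.univ.erase j, g i (p i) (q i)) * f q) := by
    intro j
    have h1 : ∀ q : ∀ i, Fin (n i),
        (∏ i, g i (p i) (q i)) * ∑ m : Fin (n j), B j (q j) m * f (Function.update q j m)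
          = ∑ m : Fin (n j), (∏ i, g i (p i) (q i)) * (B j (q j) m * f (Function.update q j m)) :=
      fun q => Finset.mul_sum _ _ _
    simp only [h1]
    rw [← Fintype.sum_prod_type']
    rw [← Equiv.sum_comp (σ j)
      (fun x => (∏ i, g i (p i) (x.1 i)) * (B j (x.1 j) x.2 * f (Function.update x.1 j x.2)))]
    rw [Fintype.sum_prod_type]
    refine Finset.sum_congr rfl fun q _ => ?_
    rw [Finset.sum_mul]
    refine Finset.sum_congr rfl fun m _ => ?_
    simp only [σ, Equiv.coe_fn_mk]
    rw [Function.update_self, Function.update_idem, Function.update_eq_self]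
    have : (∏ i, g i (p i) (Function.update q j m i))
        = g j (p j) m * ∏ i ∈ Finset.univ.erase j, g i (p i) (q i) := by
      rw [← Finset.mul_prod_erase Finset.univ _ (Finset.mem_univ j), Function.update_self]
      congr 1
      exact Finset.prod_congr rfl fun i hi => by
        rw [Function.update_of_ne (Finset.ne_of_mem_erase hi)]
    rw [this]
    ring
  calc (∑ j : Fin d, ∑ k : Fin (n j), A j (p j) k *
          ∑ q : ∀ i, Fin (n i), (∏ i, g i (Function.update p j k i) (q i)) * f q)
      = ∑ j : Fin d, ∑ q : ∀ i, Fin (n i), (∑ k, A j (p j) k * g j k (q j)) *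
          ((∏ i ∈ Finset.univ.erase j, g i (p i) (q i)) * f q) :=
        Finset.sum_congr rfl fun j _ => lhs_eq j
    _ = ∑ j : Fin d, ∑ q : ∀ i, Fin (n i), (∑ m, g j (p j) m * B j m (q j)) *
          ((∏ i ∈ Finset.univ.erase j, g i (p i) (q i)) * f q) := by
        refine Finset.sum_congr rfl fun j _ => Finset.sum_congr rfl fun q _ => ?_
        rw [hAB]
    _ = ∑ j : Fin d, ∑ q : ∀ i, Fin (n i), (∏ i, g i (p i) (q i)) *
          ∑ m : Fin (n j), B j (q j) m * f (Function.update q j m) :=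
        (Finset.sum_congr rfl fun j _ => (rhs_eq j).symm)
    _ = ∑ q : ∀ i, Fin (n i), (∏ i, g i (p i) (q i)) *
          ∑ j : Fin d, ∑ m : Fin (n j), B j (q j) m * f (Function.update q j m) := by
        rw [Finset.sum_comm]
        exact Finset.sum_congr rfl fun q _ => (Finset.mul_sum _ _ _).symm

/-- `actT` is multiplicative in the matrix tuple. -/
lemma actT_mul (g g' : ∀ i : Fin d, Fin (n i) → Fin (n i) → ℂ)
    (f : (∀ i : Fin d, Fin (n i)) → ℂ) :
    actT g (actT g' f) = actT (fun i a b => ∑ k, g i a k * g' i k b) f := by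
  funext p
  simp only [actT]
  simp only [Finset.mul_sum]
  rw [Finset.sum_comm]
  refine Finset.sum_congr rfl fun r _ => ?_
  rw [Fintype.prod_sum, Finset.sum_mul]
  refine Finset.sum_congr rfl fun q _ => ?_
  rw [Finset.prod_mul_distrib]
  ring

/-- `actT` of the identity tuple is the identity. -/
lemma actT_id (f : (∀ i : Fin d, Fin (n i)) → ℂ) :
    actT (fun (i : Fin d) (a b : Fin (n i)) => if a = b then (1 : ℂ) else 0) f = f := by
  funext p
  simp only [actT]
  rw [Finset.sum_eq_single p]
  · simp
  · intro q _ hq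
    have : ∃ i, p i ≠ q i := by
      by_contra h
      push_neg at h
      exact hq (funext h).symm
    obtain ⟨i, hi⟩ := this
    rw [Finset.prod_eq_zero (Finset.mem_univ i) (by simp [hi]), zero_mul]
  · simp

/-- `actT g` as a linear map. -/
noncomputable def actTL (g : ∀ i : Fin d, Fin (n i) → Fin (n i) → ℂ) :
    ((∀ i : Fin d, Fin (n i)) → ℂ) →ₗ[ℂ] ((∀ i : Fin d, Fin (n i)) → ℂ) where
  toFun := actT g
  map_add' a b := by
    funext p
    simp only [actT, Pi.add_apply, mul_add]
    rw [Finset.sum_add_distrib]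
  map_smul' c a := by
    funext p
    simp only [actT, Pi.smul_apply, smul_eq_mul, RingHom.id_apply, Finset.mul_sum]
    exact Finset.sum_congr rfl fun q _ => by ring

end TensorAux

/-- For every tensor `f` and every tuple `g` of invertible matrices,
the tangent space satisfies `T_{(⊗ᵢ gᵢ) f} = (⊗ᵢ gᵢ) T_f`; in particular the
dimensions of the tangent spaces coincide. -/
theorem tangent_space_of_orbit (d : ℕ) (hd : 1 ≤ d) (n : Fin d → ℕ)
    (f : (∀ i : Fin d, Fin (n i)) → ℂ)
    (g : ∀ i : Fin d, Fin (n i) → Fin (n i) → ℂ)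
    (hg : ∀ i : Fin d, IsUnit (Matrix.of (g i) : Matrix (Fin (n i)) (Fin (n i)) ℂ)) :
    Tensor.Tspace (Tensor.actT g f) = Tensor.actT g '' Tensor.Tspace f ∧
    Module.finrank ℂ (Submodule.span ℂ (Tensor.Tspace (Tensor.actT g f))) =
      Module.finrank ℂ (Submodule.span ℂ (Tensor.Tspace f)) := by
  have hdet : ∀ i, IsUnit (Matrix.of (g i) : Matrix (Fin (n i)) (Fin (n i)) ℂ).det :=
    fun i => (Matrix.isUnit_iff_isUnit_det _).mp (hg i)
  set gi : ∀ i : Fin d, Fin (n i) → Fin (n i) → ℂ :=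
    fun i a b => ((Matrix.of (g i) : Matrix (Fin (n i)) (Fin (n i)) ℂ)⁻¹) a b with hgi
  have hginv : ∀ i, (fun (a b : Fin (n i)) => ∑ k, g i a k * gi i k b)
      = fun a b => if a = b then (1 : ℂ) else 0 := by
    intro i
    funext a b
    have h := Matrix.mul_nonsing_inv _ (hdet i)
    have h2 := congrFun (congrFun h a) b
    simpa [Matrix.mul_apply, Matrix.one_apply] using h2
  have hinvg : ∀ i, (fun (a b : Fin (n i)) => ∑ k, gi i a k * g i k b)
      = fun a b => if a = b then (1 : ℂ) else 0 := by
    intro i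
    funext a b
    have h := Matrix.nonsing_inv_mul _ (hdet i)
    have h2 := congrFun (congrFun h a) b
    simpa [Matrix.mul_apply, Matrix.one_apply] using h2
  have cancel1 : ∀ h, Tensor.actT g (Tensor.actT gi h) = h := by
    intro h
    rw [TensorAux.actT_mul]
    have : (fun (i : Fin d) (a b : Fin (n i)) => ∑ k, g i a k * gi i k b)
        = fun (i : Fin d) (a b : Fin (n i)) => if a = b then (1 : ℂ) else 0 := by
      funext i; exact hginv i
    rw [this]
    exact TensorAux.actT_id h
  have cancel2 : ∀ h, Tensor.actT gi (Tensor.actT g h) = h := by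
    intro h
    rw [TensorAux.actT_mul]
    have : (fun (i : Fin d) (a b : Fin (n i)) => ∑ k, gi i a k * g i k b)
        = fun (i : Fin d) (a b : Fin (n i)) => if a = b then (1 : ℂ) else 0 := by
      funext i; exact hinvg i
    rw [this]
    exact TensorAux.actT_id h
  have hset : Tensor.Tspace (Tensor.actT g f) = Tensor.actT g '' Tensor.Tspace f := by
    ext h
    constructor
    · rintro ⟨A, rfl⟩
      refine ⟨Tensor.lieAct (fun j a b =>
        ((Matrix.of (g j))⁻¹ * Matrix.of (A j) * Matrix.of (g j) :
          Matrix (Fin (n j)) (Fin (n j)) ℂ) a b) f, ⟨_, rfl⟩, ?_⟩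
      refine (TensorAux.key g A _ ?_ f).symm
      intro j a b
      have hmat : Matrix.of (A j) * Matrix.of (g j)
          = Matrix.of (g j) * ((Matrix.of (g j))⁻¹ * Matrix.of (A j) * Matrix.of (g j)) := by
        rw [← Matrix.mul_assoc, ← Matrix.mul_assoc, Matrix.mul_nonsing_inv _ (hdet j),
          Matrix.one_mul]
      have h2 := congrFun (congrFun hmat a) b
      simpa [Matrix.mul_apply] using h2
    · rintro ⟨h', ⟨B, rfl⟩, rfl⟩
      refine ⟨fun j a b =>
        (Matrix.of (g j) * Matrix.of (B j) * (Matrix.of (g j))⁻¹ :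
          Matrix (Fin (n j)) (Fin (n j)) ℂ) a b, ?_⟩
      refine (TensorAux.key g _ B ?_ f).symm
      intro j a b
      have hmat : (Matrix.of (g j) * Matrix.of (B j) * (Matrix.of (g j))⁻¹) * Matrix.of (g j)
          = Matrix.of (g j) * Matrix.of (B j) := by
        rw [Matrix.mul_assoc, Matrix.nonsing_inv_mul _ (hdet j), Matrix.mul_one]
      have h2 := congrFun (congrFun hmat a) b
      simpa [Matrix.mul_apply] using h2
  refine ⟨hset, ?_⟩
  rw [hset]
  have himg : Tensor.actT g '' Tensor.Tspace f = (TensorAux.actTL g) '' Tensor.Tspace f := rfl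
  rw [himg, ← Submodule.map_span]
  let E : ((∀ i : Fin d, Fin (n i)) → ℂ) ≃ₗ[ℂ] ((∀ i : Fin d, Fin (n i)) → ℂ) :=
    LinearEquiv.ofLinear (TensorAux.actTL g) (TensorAux.actTL gi)
      (LinearMap.ext cancel1) (LinearMap.ext cancel2)
  exact LinearEquiv.finrank_map_eq E (Submodule.span ℂ (Tensor.Tspace f))
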